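/- Any ordered rooted binary tree with n internal nodes can be transformed into the right caterpillar tree (the tree in which every left child of an internal node is a leaf) using at most n - 1 rotations. -/
import Mathlib


inductive BT : Type
  | leaf : BT
  | node : BT → BT → BT
deriving DecidableEq

namespace BT

/-- number of internal nodes -/
def size : BT → ℕ
  | leaf => 0
  | node l r => size l + size r + 1

/-- number of leaves -/
def nl (t : BT) : ℕ := size t + 1

/-- one (right) rotation somewhere in the tree -/
inductive Rot : BT → BT → Prop
  | root (a b c : BT) : Rot (node (node a b) c) (node a (node b c))
  | congrL {l l' : BT} (r : BT) : Rot l l' → Rot (node l r) (node l' r)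
  | congrR (l : BT) {r r' : BT} : Rot r r' → Rot (node l r) (node l r')

/-- a rotation move: a right rotation or its inverse (a left rotation) -/
def Move (s t : BT) : Prop := Rot s t ∨ Rot t s

/-- `Chain n s t`: `s` is transformed into `t` by `n` rotation moves -/
inductive Chain : ℕ → BT → BT → Prop
  | refl (t : BT) : Chain 0 t t
  | step {n : ℕ} {s u t : BT} : Move s u → Chain n u t → Chain (n + 1) s t

/-- rotation distance -/
noncomputable def dR (s t : BT) : ℕ := sInf {n | Chain n s t}

def isNode : BT → Bool
  | leaf => false
  | node _ _ => true

/-- the multiset of leaf partitions induced by internal edges, where the leaves of the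
tree are numbered from `k` on, left to right; each internal edge is recorded by the
set of leaf numbers below it. -/
def iparts : BT → ℕ → Multiset (Finset ℕ)
  | leaf, _ => 0
  | node l r, k =>
      ((if isNode l then {Finset.Ico k (k + nl l)} else 0) + iparts l k)
        + ((if isNode r then {Finset.Ico (k + nl l) (k + nl l + nl r)} else 0)
            + iparts r (k + nl l))

/-- number of common edge pairs -/
def commonEdges (s t : BT) : ℕ := ((iparts s 0) ∩ (iparts t 0)).card

/-- the right caterpillar: every internal node's left child is a leaf -/
def rightCat : ℕ → BT
  | 0 => leaf
  | n + 1 => node leaf (rightCat n)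

/-- length of the right spine -/
def rspine : BT → ℕ
  | leaf => 0
  | node _ r => rspine r + 1

/-- size of left child -/
def lsize : BT → ℕ
  | leaf => 0
  | node l _ => size l

lemma chain_congrR (l : BT) {k : ℕ} {r r' : BT} (h : Chain k r r') :
    Chain k (node l r) (node l r') := by
  induction h with
  | refl t => exact Chain.refl _
  | step m _ ih =>
      refine Chain.step ?_ ih
      rcases m with h | h
      · exact Or.inl (Rot.congrR l h)
      · exact Or.inr (Rot.congrR l h)

theorem aux (T : BT) :
    ∃ k, Chain k T (rightCat T.size) ∧ k + rspine T ≤ T.size := by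
  match T with
  | leaf => exact ⟨0, Chain.refl _, by simp [rspine, size]⟩
  | node leaf r =>
      obtain ⟨k, hc, hk⟩ := aux r
      refine ⟨k, ?_, ?_⟩
      · show Chain k (node leaf r) (rightCat (0 + r.size + 1))
        have : 0 + r.size + 1 = r.size + 1 := by omega
        rw [this, rightCat]
        exact chain_congrR leaf hc
      · simp only [size, rspine] at *
        omega
  | node (node a b) c =>
      obtain ⟨k, hc, hk⟩ := aux (node a (node b c))
      have hsz : (node a (node b c)).size = (node (node a b) c).size := by
        simp [size]; omega
      refine ⟨k + 1, ?_, ?_⟩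
      · rw [← hsz]
        exact Chain.step (Or.inl (Rot.root a b c)) hc
      · simp only [size, rspine] at *
        omega
termination_by (T.size, lsize T)
decreasing_by
  · simp only [size, lsize]
    exact Prod.Lex.left _ _ (by omega)
  · simp only [size, lsize]
    have h : a.size + (b.size + c.size + 1) + 1 = a.size + b.size + 1 + c.size + 1 := by omega
    rw [h]
    exact Prod.Lex.right _ (by omega)

theorem to_right_caterpillar (n : ℕ) (T : BT) (hT : T.size = n) :
    ∃ k, Chain k T (rightCat n) ∧ k ≤ n - 1 := by
  obtain ⟨k, hc, hk⟩ := aux T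
  rw [hT] at hc hk
  refine ⟨k, hc, ?_⟩
  cases T with
  | leaf => simp [size] at hT; omega
  | node l r => simp only [rspine] at hk; omega

end BT
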